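/- arXiv:1608.03680 — 11 statements merged into one kernel-verified Lean document; each statement's English description precedes it below -/
import Mathlib

section
/- Let V be a finite set of weighted points in the plane, x a point, and R > 0. Define W*(x) as the maximum over all y with dist(x,y) ≥ R of the total weight of points v ∈ V with dist(v,y) < dist(v,x). Then this maximum is attained by some point y with dist(x,y) = R exactly. -/
open scoped RealInnerProductSpace

noncomputable section

/-- The Euclidean plane. -/
abbrev Plane := EuclideanSpace ℝ (Fin 2)

/-- The point of the plane with coordinates `(a, b)`. -/
def pt (a b : ℝ) : Plane := (WithLp.equiv 2 (Fin 2 → ℝ)).symm ![a, b]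

/-- `Wcap V w x y` = total weight of customers in `V` strictly closer to `y` than to `x`. -/
def Wcap (V : Finset Plane) (w : Plane → ℝ) (x y : Plane) : ℝ :=
  ∑ v ∈ V, if dist v y < dist v x then w v else 0

/-- `Wstar V w R x` = the weight loss of `x`: the supremum of captures over feasible
follower positions `y` with `dist x y ≥ R`. -/
def Wstar (V : Finset Plane) (w : Plane → ℝ) (R : ℝ) (x : Plane) : ℝ :=
  sSup (Wcap V w x '' {y : Plane | R ≤ dist x y})

/-- Unit direction of polar angle `θ`. -/
def dir (θ : ℝ) : Plane := pt (Real.cos θ) (Real.sin θ)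

/-- `Wang V w R x θ` = capture of the follower placed at `x + R•(cos θ, sin θ)` against `x`. -/
def Wang (V : Finset Plane) (w : Plane → ℝ) (R : ℝ) (x : Plane) (θ : ℝ) : ℝ :=
  Wcap V w x (x + R • dir θ)

/-- The weight loss of `x`, as the supremum of captures over the circle of radius `R`. -/
def WstarC (V : Finset Plane) (w : Plane → ℝ) (R : ℝ) (x : Plane) : ℝ :=
  sSup (Set.range (Wang V w R x))

lemma norm_dir (θ : ℝ) : ‖dir θ‖ = 1 := by
  have : ‖dir θ‖ = Real.sqrt ((Real.cos θ)^2 + (Real.sin θ)^2) := by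
    rw [EuclideanSpace.norm_eq]
    simp [dir, pt, Fin.sum_univ_two, sq_abs, sq]
  rw [this, Real.cos_sq_add_sin_sq, Real.sqrt_one]

/-- the maximum capture over all feasible follower positions (at distance
at least `R` from `x`) is attained at some point exactly at distance `R` from `x`. -/
theorem stmt_1 (V : Finset Plane) (w : Plane → ℝ) (hw : ∀ v ∈ V, 0 < w v)
    (R : ℝ) (hR : 0 < R) (x : Plane) :
    ∃ y : Plane, dist x y = R ∧
      ∀ y' : Plane, R ≤ dist x y' → Wcap V w x y' ≤ Wcap V w x y := by
  set T : Set ℝ := Wcap V w x '' {y : Plane | R ≤ dist x y} with hT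
  have hfin : T.Finite := by
    apply Set.Finite.subset ((V.powerset.image (fun S => ∑ v ∈ S, w v)).finite_toSet)
    rintro _ ⟨y, _, rfl⟩
    simp only [Finset.coe_image, Set.mem_image, Finset.mem_coe, Finset.mem_powerset]
    exact ⟨V.filter (fun v => dist v y < dist v x), Finset.filter_subset _ _,
      by rw [Wcap, Finset.sum_filter]⟩
  have hne : T.Nonempty := by
    refine ⟨Wcap V w x (x + R • dir 0), ⟨x + R • dir 0, ?_, rfl⟩⟩
    simp only [Set.mem_setOf_eq, dist_self_add_right, norm_smul, norm_dir,
      Real.norm_eq_abs, abs_of_pos hR, mul_one, le_refl]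
  obtain ⟨y0, hy0, hval⟩ := hne.csSup_mem hfin
  set d := dist x y0 with hd
  have hdR : R ≤ d := hy0
  have hdpos : 0 < d := lt_of_lt_of_le hR hdR
  set t := R / d with htdef
  have ht0 : 0 < t := div_pos hR hdpos
  have ht1 : t ≤ 1 := (div_le_one hdpos).2 hdR
  refine ⟨x + t • (y0 - x), ?_, ?_⟩
  · rw [dist_self_add_right, norm_smul, Real.norm_eq_abs, abs_of_pos ht0,
      ← dist_eq_norm, dist_comm, ← hd, htdef, div_mul_cancel₀ _ (ne_of_gt hdpos)]
  · intro y' hy'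
    have h1 : Wcap V w x y' ≤ Wcap V w x y0 := by
      rw [hval]
      exact le_csSup hfin.bddAbove ⟨y', hy', rfl⟩
    refine h1.trans ?_
    apply Finset.sum_le_sum
    intro v hv
    by_cases h : dist v y0 < dist v x
    · have key : dist v (x + t • (y0 - x)) < dist v x := by
        have heq : v - (x + t • (y0 - x)) = (1 - t) • (v - x) + t • (v - y0) := by
          module
        rw [dist_eq_norm, heq]
        calc ‖(1 - t) • (v - x) + t • (v - y0)‖
            ≤ ‖(1 - t) • (v - x)‖ + ‖t • (v - y0)‖ := norm_add_le _ _
          _ = (1 - t) * ‖v - x‖ + t * ‖v - y0‖ := by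
              rw [norm_smul, norm_smul, Real.norm_eq_abs, Real.norm_eq_abs,
                abs_of_nonneg (by linarith), abs_of_pos ht0]
          _ < ‖v - x‖ := by
              rw [dist_eq_norm, dist_eq_norm] at h
              nlinarith
      simp [h, key]
    · simp only [h, if_false]
      split
      · exact le_of_lt (hw v hv)
      · exact le_refl 0
end
end

section
/- Let V be a finite weighted point set, R > 0, and W₀ > 0. A point x satisfies W*(x) < W₀ if and only if x belongs to the intersection I(W₀) of the convex hulls CH(𝒞(S)) over all subsets S ⊆ V with W(S) ≥ W₀. -/
open scoped RealInnerProductSpace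
open scoped Pointwise

noncomputable section

lemma aux_capture_iff {R : ℝ} (hR : 0 < R) {u : Plane} (hu : ‖u‖ = 1) (x v : Plane) :
    dist v (x + R • u) < dist v x ↔ R / 2 < ⟪u, v - x⟫ := by
  have h1 : dist v (x + R • u) = ‖(v - x) - R • u‖ := by
    rw [dist_eq_norm]; congr 1; abel
  have h2 : dist v x = ‖v - x‖ := dist_eq_norm v x
  have hsq : ‖(v - x) - R • u‖ ^ 2
      = ‖v - x‖ ^ 2 - 2 * (R * ⟪u, v - x⟫) + R ^ 2 := by
    rw [norm_sub_sq_real, real_inner_smul_right, real_inner_comm, norm_smul, hu,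
      Real.norm_eq_abs, abs_of_pos hR]
    ring
  rw [h1, h2]
  constructor
  · intro h
    have hs : ‖(v - x) - R • u‖ ^ 2 < ‖v - x‖ ^ 2 := by
      nlinarith [norm_nonneg ((v - x) - R • u), norm_nonneg (v - x)]
    nlinarith
  · intro h
    have hs : ‖(v - x) - R • u‖ ^ 2 < ‖v - x‖ ^ 2 := by nlinarith
    nlinarith [norm_nonneg ((v - x) - R • u), norm_nonneg (v - x)]

/-- If every customer in `S` is at inner-product distance `> R/2` from `x` in direction `u`,
then `x` is not in the convex hull of the balls around `S`. -/
lemma aux_not_mem_hull {R : ℝ} (hR : 0 < R) {u : Plane} (hu : ‖u‖ = 1) {x : Plane}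
    (S : Finset Plane) (hkey : ∀ v ∈ S, R / 2 < ⟪u, v - x⟫) :
    x ∉ convexHull ℝ (⋃ v ∈ S, Metric.closedBall v (R / 2)) := by
  intro hx
  have hsub : convexHull ℝ (⋃ v ∈ S, Metric.closedBall v (R / 2))
      ⊆ {p : Plane | ⟪u, x⟫ < ⟪u, p⟫} := by
    apply convexHull_min
    · intro p hp
      simp only [Set.mem_iUnion] at hp
      obtain ⟨v, hv, hpv⟩ := hp
      have hdist : ‖p - v‖ ≤ R / 2 := by
        rw [← dist_eq_norm]; exact hpv
      have hcs : |⟪u, p - v⟫| ≤ ‖p - v‖ := by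
        have := abs_real_inner_le_norm u (p - v)
        rwa [hu, one_mul] at this
      have h1 : R / 2 < ⟪u, v - x⟫ := hkey v hv
      have h2 : ⟪u, p - x⟫ = ⟪u, v - x⟫ + ⟪u, p - v⟫ := by
        rw [← inner_add_right]; congr 1; abel
      have h3 : (0:ℝ) < ⟪u, p - x⟫ := by
        have := abs_le.mp hcs
        linarith [this.1]
      have h4 : ⟪u, p - x⟫ = ⟪u, p⟫ - ⟪u, x⟫ := inner_sub_right u p x
      simp only [Set.mem_setOf_eq]
      linarith
    · have hlin : IsLinearMap ℝ (fun p : Plane => (inner ℝ u p : ℝ)) := by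
        constructor
        · intro a b; exact inner_add_right u a b
        · intro c a; simp [real_inner_smul_right]
      exact convex_halfSpace_gt hlin (inner ℝ u x : ℝ)
  exact lt_irrefl (⟪u, x⟫ : ℝ) (hsub hx)

/-- `W*(x) < W₀` iff `x` lies in `I(W₀)`, the intersection of the convex
hulls `CH(𝒞(S))` over all subsets `S ⊆ V` of weight at least `W₀`. -/
theorem stmt_3 (V : Finset Plane) (w : Plane → ℝ) (hw : ∀ v ∈ V, 0 < w v)
    (R : ℝ) (hR : 0 < R) (W₀ : ℝ) (hW₀ : 0 < W₀) (x : Plane) :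
    (∀ y : Plane, R ≤ dist x y → Wcap V w x y < W₀) ↔
      ∀ S : Finset Plane, S ⊆ V → W₀ ≤ ∑ v ∈ S, w v →
        x ∈ convexHull ℝ (⋃ v ∈ S, Metric.closedBall v (R / 2)) := by
  classical
  constructor
  · -- forward direction: small capture everywhere ⇒ in every hull
    intro h S hSV hWS
    by_contra hx
    -- the hull equals CH(S) + closed ball, hence is closed
    have hEq : (⋃ v ∈ S, Metric.closedBall v (R / 2))
        = (S : Set Plane) + Metric.closedBall (0 : Plane) (R / 2) := by
      ext p
      simp only [Set.mem_iUnion, Set.mem_add, Metric.mem_closedBall]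
      constructor
      · rintro ⟨v, hv, hpv⟩
        exact ⟨v, hv, p - v, by rwa [dist_eq_norm, sub_zero, ← dist_eq_norm], by abel⟩
      · rintro ⟨v, hv, b, hb, hvb⟩
        refine ⟨v, hv, ?_⟩
        rw [dist_eq_norm] at hb ⊢
        rw [sub_zero] at hb
        have : p - v = b := by rw [← hvb]; abel
        rwa [this]
    have hclosed : IsClosed (convexHull ℝ (⋃ v ∈ S, Metric.closedBall v (R / 2))) := by
      rw [hEq, convexHull_add, (convex_closedBall (0:Plane) (R/2)).convexHull_eq]
      exact ((S.finite_toSet.isCompact_convexHull ℝ).add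
        (isCompact_closedBall (0:Plane) (R/2))).isClosed
    obtain ⟨f, c, hfx, hfs⟩ :=
      geometric_hahn_banach_point_closed (convex_convexHull ℝ _) hclosed hx
    -- S is nonempty
    have hSne : S.Nonempty := by
      rcases Finset.eq_empty_or_nonempty S with h0 | h0
      · rw [h0] at hWS; simp at hWS; linarith
      · exact h0
    obtain ⟨v₀, hv₀⟩ := hSne
    -- the separating vector
    set a : Plane := (InnerProductSpace.toDual ℝ Plane).symm f with ha_def
    have hfa : ∀ p : Plane, ⟪a, p⟫ = f p := fun p => InnerProductSpace.toDual_symm_apply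
    have hv₀mem : v₀ ∈ convexHull ℝ (⋃ v ∈ S, Metric.closedBall v (R / 2)) := by
      apply subset_convexHull
      simp only [Set.mem_iUnion]
      exact ⟨v₀, hv₀, Metric.mem_closedBall_self (by positivity)⟩
    have ha0 : a ≠ 0 := by
      intro h0
      have h1 : f x = 0 := by rw [← hfa, h0, inner_zero_left]
      have h2 : f v₀ = 0 := by rw [← hfa, h0, inner_zero_left]
      have := hfs v₀ hv₀mem
      linarith
    have hna : (0:ℝ) < ‖a‖ := norm_pos_iff.mpr ha0
    set u : Plane := ‖a‖⁻¹ • a with hu_def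
    have hu : ‖u‖ = 1 := norm_smul_inv_norm ha0
    have hau : ⟪a, u⟫ = ‖a‖ := by
      rw [hu_def, real_inner_smul_right, real_inner_self_eq_norm_sq]
      field_simp
    -- each v ∈ S is captured by y = x + R • u
    have hcap : ∀ v ∈ S, dist v (x + R • u) < dist v x := by
      intro v hv
      rw [aux_capture_iff hR hu]
      have hmem : v - (R / 2) • u ∈ convexHull ℝ (⋃ v ∈ S, Metric.closedBall v (R / 2)) := by
        apply subset_convexHull
        simp only [Set.mem_iUnion]
        refine ⟨v, hv, ?_⟩
        rw [Metric.mem_closedBall, dist_eq_norm]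
        have : v - (R / 2) • u - v = -((R / 2) • u) := by abel
        rw [this, norm_neg, norm_smul, hu, Real.norm_eq_abs, abs_of_pos (by positivity), mul_one]
      have h1 := hfs _ hmem
      have h2 : f (v - (R / 2) • u) = ⟪a, v⟫ - (R / 2) * ‖a‖ := by
        rw [map_sub, map_smul, ← hfa v, ← hfa u, hau]; rfl
      have h3 : ⟪a, x⟫ < c := by rwa [hfa]
      have h4 : (R / 2) * ‖a‖ < ⟪a, v - x⟫ := by
        rw [inner_sub_right]
        linarith [h2 ▸ h1]
      have h5 : ⟪u, v - x⟫ = ‖a‖⁻¹ * ⟪a, v - x⟫ := real_inner_smul_left a (v - x) ‖a‖⁻¹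
      rw [h5]
      rw [lt_inv_mul_iff₀ hna]
      linarith [h4]
    -- contradiction with the capture bound
    have hdist : R ≤ dist x (x + R • u) := by
      rw [dist_self_add_right, norm_smul, hu, Real.norm_eq_abs, abs_of_pos hR, mul_one]
    have hlt := h _ hdist
    have hge : ∑ v ∈ S, w v ≤ Wcap V w x (x + R • u) := by
      unfold Wcap
      calc ∑ v ∈ S, w v
          = ∑ v ∈ S, (if dist v (x + R • u) < dist v x then w v else 0) := by
            refine Finset.sum_congr rfl fun v hv => ?_
            rw [if_pos (hcap v hv)]
        _ ≤ ∑ v ∈ V, (if dist v (x + R • u) < dist v x then w v else 0) := by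
            refine Finset.sum_le_sum_of_subset_of_nonneg hSV fun v hv _ => ?_
            split_ifs
            · exact le_of_lt (hw v hv)
            · exact le_rfl
    linarith
  · -- backward direction
    intro h y hy
    by_contra hlt
    push_neg at hlt
    set S : Finset Plane := V.filter (fun v => dist v y < dist v x) with hS_def
    have hSsum : ∑ v ∈ S, w v = Wcap V w x y := by
      rw [hS_def, Finset.sum_filter]; rfl
    have hxmem := h S (Finset.filter_subset _ _) (by rw [hSsum]; exact hlt)
    have hyx : (0:ℝ) < ‖y - x‖ := by
      have : ‖y - x‖ = dist x y := by rw [dist_eq_norm, norm_sub_rev]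
      linarith
    have hyx0 : y - x ≠ 0 := by
      intro h0; rw [h0, norm_zero] at hyx; exact lt_irrefl _ hyx
    set u : Plane := ‖y - x‖⁻¹ • (y - x) with hu_def
    have hu : ‖u‖ = 1 := norm_smul_inv_norm hyx0
    have hkey : ∀ v ∈ S, R / 2 < ⟪u, v - x⟫ := by
      intro v hv
      have hvc : dist v y < dist v x := (Finset.mem_filter.mp hv).2
      have h1 : ‖v - y‖ < ‖v - x‖ := by rwa [dist_eq_norm, dist_eq_norm] at hvc
      have h2 : ‖v - y‖ ^ 2 < ‖v - x‖ ^ 2 := by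
        nlinarith [norm_nonneg (v - y), norm_nonneg (v - x)]
      have h3 : ‖v - y‖ ^ 2 = ‖v - x‖ ^ 2 - 2 * ⟪v - x, y - x⟫ + ‖y - x‖ ^ 2 := by
        have heq : v - y = (v - x) - (y - x) := by abel
        rw [heq, norm_sub_sq_real]
      have h4 : ‖y - x‖ ^ 2 / 2 < ⟪v - x, y - x⟫ := by linarith
      have h5 : ⟪u, v - x⟫ = ‖y - x‖⁻¹ * ⟪y - x, v - x⟫ :=
        real_inner_smul_left (y - x) (v - x) ‖y - x‖⁻¹
      have hRle : R ≤ ‖y - x‖ := by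
        have : ‖y - x‖ = dist x y := by rw [dist_eq_norm, norm_sub_rev]
        linarith
      rw [h5, real_inner_comm, lt_inv_mul_iff₀ hyx]
      nlinarith
    exact aux_not_mem_hull hR hu S hkey hxmem
end
end

section
/- If a point x lies inside CH(𝒞(S)) (the convex hull of the closed disks of radius R/2 centered at points of S), then for every point y with dist(x,y) ≥ R there exists v ∈ S with dist(v,y) ≥ dist(v,x); i.e., no feasible y captures all of S. -/
open scoped RealInnerProductSpace

noncomputable section

/-- if `x` lies inside `CH(𝒞(S))`, then no feasible follower position
captures all of `S`. -/
theorem stmt_4 (S : Finset Plane) (R : ℝ) (hR : 0 < R) (x : Plane)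
    (hx : x ∈ convexHull ℝ (⋃ v ∈ S, Metric.closedBall v (R / 2))) :
    ∀ y : Plane, R ≤ dist x y → ∃ v ∈ S, dist v x ≤ dist v y := by
  intro y hy
  by_contra h
  push_neg at h
  set u : Plane := x - y with hu
  have hun : R ≤ ‖u‖ := by rwa [dist_eq_norm] at hy
  have hlin : IsLinearMap ℝ (fun p : Plane => ⟪p, u⟫) :=
    ⟨fun a b => inner_add_left a b u, fun c a => real_inner_smul_left a u c⟩
  have hconv : Convex ℝ {p : Plane | ⟪p, u⟫ < (‖x‖^2 - ‖y‖^2)/2 + R/2 * ‖u‖} :=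
    convex_halfSpace_lt hlin _
  have hsub : (⋃ v ∈ S, Metric.closedBall v (R / 2)) ⊆
      {p : Plane | ⟪p, u⟫ < (‖x‖^2 - ‖y‖^2)/2 + R/2 * ‖u‖} := by
    intro p hp
    simp only [Set.mem_iUnion, Set.mem_setOf_eq] at hp ⊢
    obtain ⟨v, hvS, hpv⟩ := hp
    have hvlt := h v hvS
    have h1 : ‖v - y‖ < ‖v - x‖ := by rwa [dist_eq_norm, dist_eq_norm] at hvlt
    have h2 : ‖v - y‖^2 < ‖v - x‖^2 := by
      nlinarith [norm_nonneg (v - y), norm_nonneg (v - x)]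
    have hvy : ‖v - y‖^2 = ‖v‖^2 - 2 * ⟪v, y⟫ + ‖y‖^2 := by
      rw [norm_sub_sq_real]
    have hvx : ‖v - x‖^2 = ‖v‖^2 - 2 * ⟪v, x⟫ + ‖x‖^2 := by
      rw [norm_sub_sq_real]
    have hvu : ⟪v, u⟫ = ⟪v, x⟫ - ⟪v, y⟫ := inner_sub_right v x y
    have hball : ‖p - v‖ ≤ R / 2 := by
      rwa [Metric.mem_closedBall, dist_eq_norm] at hpv
    have hip : ⟪p - v, u⟫ ≤ ‖p - v‖ * ‖u‖ := real_inner_le_norm _ _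
    have hdecomp : ⟪p, u⟫ = ⟪v, u⟫ + ⟪p - v, u⟫ := by
      rw [← inner_add_left, add_sub_cancel]
    have hun0 : (0:ℝ) ≤ ‖u‖ := norm_nonneg u
    nlinarith [mul_le_mul_of_nonneg_right hball hun0]
  have hxin := convexHull_min hsub hconv hx
  simp only [Set.mem_setOf_eq] at hxin
  have hxu : ⟪x, u⟫ = ‖x‖^2 - ⟪x, y⟫ := by
    rw [hu, inner_sub_right, real_inner_self_eq_norm_sq]
  have husq : ‖u‖^2 = ‖x‖^2 - 2 * ⟪x, y⟫ + ‖y‖^2 := by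
    rw [hu, norm_sub_sq_real]
  nlinarith [mul_le_mul_of_nonneg_right hun (norm_nonneg u)]
end
end

section
/- Assume the leader is at x and y realizes W*(x) with dist(x,y) = R; let F be the line through x parallel to the perpendicular bisector B(x,y). Then for any point x' lying on the closed side of F not containing y (i.e., x' ∉ H⁻(F, y)), the point y' at distance R from x' in the same direction (y' = x' + (y − x)) is feasible for x' and satisfies W(y'|x') ≥ W(y|x); hence W*(x') ≥ W*(x). -/
open scoped RealInnerProductSpace

noncomputable section

lemma dist_sq_shift (v x u : Plane) (R : ℝ) (hu : ‖u‖ = 1) :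
    dist v (x + R • u) ^ 2 = dist v x ^ 2 - 2 * R * ⟪v - x, u⟫ + R ^ 2 := by
  rw [dist_eq_norm, dist_eq_norm]
  have h : v - (x + R • u) = (v - x) - R • u := by abel
  rw [h, @norm_sub_sq_real, real_inner_smul_right, norm_smul, mul_pow]
  simp [hu, abs_sq]
  ring

lemma capt_mono (v x x' u : Plane) (R : ℝ) (hR : 0 < R) (hu : ‖u‖ = 1)
    (hx' : ⟪x' - x, u⟫ ≤ 0) (h : dist v (x + R • u) < dist v x) :
    dist v (x' + R • u) < dist v x' := by
  have h1 := dist_sq_shift v x u R hu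
  have h2 := dist_sq_shift v x' u R hu
  have hsq : dist v (x + R • u) ^ 2 < dist v x ^ 2 :=
    pow_lt_pow_left₀ h dist_nonneg (by norm_num)
  have hin : ⟪v - x, u⟫ ≤ ⟪v - x', u⟫ := by
    have : ⟪v - x', u⟫ - ⟪v - x, u⟫ = -⟪x' - x, u⟫ := by
      rw [← inner_sub_left, ← inner_neg_left]
      congr 1
      abel
    linarith [this]
  have hsq' : dist v (x' + R • u) ^ 2 < dist v x' ^ 2 := by nlinarith
  exact lt_of_pow_lt_pow_left₀ 2 dist_nonneg (by nlinarith)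

/-- pruning lemma. If `y = x + R•u` realizes `W*(x)` and `x'` lies on the
closed side of the line through `x` perpendicular to `u` away from `y`, then
`y' = x' + R•u` is feasible for `x'`, captures at least as much, and `W*(x') ≥ W*(x)`. -/
theorem stmt_6 (V : Finset Plane) (w : Plane → ℝ) (hw : ∀ v ∈ V, 0 < w v)
    (R : ℝ) (hR : 0 < R) (x u : Plane) (hu : ‖u‖ = 1)
    (hmax : ∀ y' : Plane, R ≤ dist x y' → Wcap V w x y' ≤ Wcap V w x (x + R • u))
    (x' : Plane) (hx' : ⟪x' - x, u⟫ ≤ 0) :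
    dist x' (x' + R • u) = R ∧
    Wcap V w x (x + R • u) ≤ Wcap V w x' (x' + R • u) ∧
    Wstar V w R x ≤ Wstar V w R x' := by
  have hdist : ∀ z : Plane, dist z (z + R • u) = R := by
    intro z
    rw [dist_eq_norm]
    have : z - (z + R • u) = (-R) • u := by
      rw [neg_smul]; abel
    rw [this, norm_smul, hu]
    simp [abs_of_pos hR]
  have hcap : Wcap V w x (x + R • u) ≤ Wcap V w x' (x' + R • u) := by
    apply Finset.sum_le_sum
    intro v hv
    by_cases h : dist v (x + R • u) < dist v x
    · rw [if_pos h, if_pos (capt_mono v x x' u R hR hu hx' h)]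
    · rw [if_neg h]
      split
      · exact (hw v hv).le
      · exact le_refl 0
  refine ⟨hdist x', hcap, ?_⟩
  have hbdd : ∀ z y : Plane, Wcap V w z y ≤ ∑ v ∈ V, w v := by
    intro z y
    apply Finset.sum_le_sum
    intro v hv
    split
    · exact le_refl _
    · exact (hw v hv).le
  have hb : BddAbove (Wcap V w x' '' {y : Plane | R ≤ dist x' y}) := by
    refine ⟨∑ v ∈ V, w v, ?_⟩
    rintro _ ⟨y, _, rfl⟩
    exact hbdd x' y
  have hne : (Wcap V w x '' {y : Plane | R ≤ dist x y}).Nonempty :=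
    ⟨Wcap V w x (x + R • u), ⟨x + R • u, (hdist x).ge, rfl⟩⟩
  have h1 : Wstar V w R x ≤ Wcap V w x (x + R • u) := by
    apply csSup_le hne
    rintro _ ⟨y, hy, rfl⟩
    exact hmax y hy
  have h2 : Wcap V w x' (x' + R • u) ≤ Wstar V w R x' :=
    le_csSup hb ⟨x' + R • u, (hdist x').ge, rfl⟩
  calc Wstar V w R x ≤ Wcap V w x (x + R • u) := h1
    _ ≤ Wcap V w x' (x' + R • u) := hcap
    _ ≤ Wstar V w R x' := h2
end
end

section
/- The weight-loss function W* is quasi-convex along every line: for any two distinct points x₁, x₂ and any x on the open segment between them, W*(x) ≤ max{W*(x₁), W*(x₂)}. -/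
open scoped RealInnerProductSpace

noncomputable section

lemma dist_lt_dist_iff' (v a b : Plane) :
    dist v b < dist v a ↔ ‖b‖ ^ 2 - 2 * ⟪v, b⟫ < ‖a‖ ^ 2 - 2 * ⟪v, a⟫ := by
  rw [dist_eq_norm, dist_eq_norm,
    ← pow_lt_pow_iff_left₀ (norm_nonneg (v - b)) (norm_nonneg (v - a)) two_ne_zero,
    norm_sub_sq_real, norm_sub_sq_real]
  constructor <;> intro h <;> linarith

/-- The pruning construction: if `x'` lies on the closed far side of the line through `x`
perpendicular to `y - x`, then reflecting `x'` across the bisector of `x` and `y` yields a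
feasible follower position `y'` for `x'` capturing exactly the same half-plane. -/
lemma prune (x y x' : Plane) (hxy : x ≠ y) (hs : ⟪x' - x, y - x⟫ ≤ 0) :
    ∃ y', dist x y ≤ dist x' y' ∧
      ∀ v : Plane, dist v y' < dist v x' ↔ dist v y < dist v x := by
  set e : Plane := y - x with he
  have hene : e ≠ 0 := sub_ne_zero.mpr (Ne.symm hxy)
  have hee : (0:ℝ) < ‖e‖ ^ 2 := pow_pos (norm_pos_iff.mpr hene) 2
  set lam : ℝ := 1 - 2 * ⟪x' - x, e⟫ / ‖e‖ ^ 2 with hlam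
  have hlam1 : 1 ≤ lam := by
    have : 2 * ⟪x' - x, e⟫ / ‖e‖ ^ 2 ≤ 0 :=
      div_nonpos_of_nonpos_of_nonneg (by linarith) (le_of_lt hee)
    simp only [hlam]; linarith
  have hlampos : 0 < lam := by linarith
  have hsub : ⟪x' - x, e⟫ = ⟪x', e⟫ - ⟪x, e⟫ := inner_sub_left x' x e
  have hlamE : lam * ‖e‖ ^ 2 = ‖e‖ ^ 2 - 2 * ⟪x', e⟫ + 2 * ⟪x, e⟫ := by
    rw [hlam, sub_mul, one_mul, div_mul_cancel₀ _ (ne_of_gt hee), hsub]; ring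
  refine ⟨x' + lam • e, ?_, ?_⟩
  · have h1 : dist x' (x' + lam • e) = lam * ‖e‖ := by
      rw [dist_self_add_right, norm_smul, Real.norm_eq_abs, abs_of_pos hlampos]
    have h2 : dist x y = ‖e‖ := by rw [dist_eq_norm', he]
    rw [h1, h2]
    nlinarith [norm_nonneg e]
  · intro v
    have hy : y = x + e := by rw [he]; abel
    rw [dist_lt_dist_iff' v x' (x' + lam • e), dist_lt_dist_iff' v x y, hy]
    have hsm : ‖lam • e‖ ^ 2 = lam ^ 2 * ‖e‖ ^ 2 := by
      rw [norm_smul, mul_pow, Real.norm_eq_abs, sq_abs]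
    have e1 : ‖x' + lam • e‖ ^ 2 = ‖x'‖ ^ 2 + 2 * (lam * ⟪x', e⟫) + lam ^ 2 * ‖e‖ ^ 2 := by
      rw [norm_add_sq_real, real_inner_smul_right, hsm]
    have e2 : ⟪v, x' + lam • e⟫ = ⟪v, x'⟫ + lam * ⟪v, e⟫ := by
      rw [inner_add_right, real_inner_smul_right]
    have e3 : ‖x + e‖ ^ 2 = ‖x‖ ^ 2 + 2 * ⟪x, e⟫ + ‖e‖ ^ 2 := norm_add_sq_real x e
    have e4 : ⟪v, x + e⟫ = ⟪v, x⟫ + ⟪v, e⟫ := inner_add_right v x e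
    rw [e1, e2, e3, e4]
    have key : lam ^ 2 * ‖e‖ ^ 2 + 2 * (lam * ⟪x', e⟫) - 2 * (lam * ⟪v, e⟫) < 0 ↔
        lam * ‖e‖ ^ 2 + 2 * ⟪x', e⟫ - 2 * ⟪v, e⟫ < 0 := by
      rw [show lam ^ 2 * ‖e‖ ^ 2 + 2 * (lam * ⟪x', e⟫) - 2 * (lam * ⟪v, e⟫) =
          lam * (lam * ‖e‖ ^ 2 + 2 * ⟪x', e⟫ - 2 * ⟪v, e⟫) by ring]
      constructor
      · intro h
        by_contra hcon
        push_neg at hcon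
        nlinarith
      · intro h
        nlinarith
    constructor
    · intro h
      have := key.mp (by linarith)
      linarith [hlamE]
    · intro h
      have := key.mpr (by linarith [hlamE])
      linarith

lemma Wcap_nonneg (V : Finset Plane) (w : Plane → ℝ) (hw : ∀ v ∈ V, 0 < w v)
    (x y : Plane) : 0 ≤ Wcap V w x y :=
  Finset.sum_nonneg fun v hv => by
    by_cases h : dist v y < dist v x <;> simp [h, le_of_lt (hw v hv)]

lemma Wcap_le_sum (V : Finset Plane) (w : Plane → ℝ) (hw : ∀ v ∈ V, 0 < w v)
    (x y : Plane) : Wcap V w x y ≤ ∑ v ∈ V, w v :=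
  Finset.sum_le_sum fun v hv => by
    by_cases h : dist v y < dist v x <;> simp [h, le_of_lt (hw v hv)]

lemma Wstar_bddAbove (V : Finset Plane) (w : Plane → ℝ) (hw : ∀ v ∈ V, 0 < w v)
    (R : ℝ) (x : Plane) : BddAbove (Wcap V w x '' {y : Plane | R ≤ dist x y}) := by
  refine ⟨∑ v ∈ V, w v, ?_⟩
  rintro a ⟨y, _, rfl⟩
  exact Wcap_le_sum V w hw x y

lemma Wstar_nonneg (V : Finset Plane) (w : Plane → ℝ) (hw : ∀ v ∈ V, 0 < w v)
    (R : ℝ) (hR : 0 < R) (x : Plane) : 0 ≤ Wstar V w R x := by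
  have hy : (x + R • (EuclideanSpace.single 0 (1:ℝ) : Plane)) ∈ {y : Plane | R ≤ dist x y} := by
    simp only [Set.mem_setOf_eq, dist_self_add_right, norm_smul, Real.norm_eq_abs,
      abs_of_pos hR, EuclideanSpace.norm_single, norm_one, mul_one, le_refl]
  calc (0:ℝ) ≤ Wcap V w x _ := Wcap_nonneg V w hw x _
    _ ≤ Wstar V w R x := le_csSup (Wstar_bddAbove V w hw R x) ⟨_, hy, rfl⟩

/-- the weight-loss function is quasi-convex along every line. -/
theorem stmt_7 (V : Finset Plane) (w : Plane → ℝ) (hw : ∀ v ∈ V, 0 < w v)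
    (R : ℝ) (hR : 0 < R) (x₁ x₂ x : Plane) (hne : x₁ ≠ x₂)
    (t : ℝ) (ht0 : 0 < t) (ht1 : t < 1) (hx : x = x₁ + t • (x₂ - x₁)) :
    Wstar V w R x ≤ max (Wstar V w R x₁) (Wstar V w R x₂) := by
  have h0 : (0:ℝ) ≤ max (Wstar V w R x₁) (Wstar V w R x₂) :=
    le_trans (Wstar_nonneg V w hw R hR x₁) (le_max_left _ _)
  apply Real.sSup_le _ h0
  rintro a ⟨y, hy, rfl⟩
  have hdxy : R ≤ dist x y := hy
  have hxy : x ≠ y := by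
    intro h; rw [h, dist_self] at hdxy; linarith
  -- One of the two endpoints is on the far side of the perpendicular line
  have h1 : x₁ - x = (-t) • (x₂ - x₁) := by rw [hx]; module
  have h2 : x₂ - x = (1 - t) • (x₂ - x₁) := by rw [hx]; module
  set c : ℝ := ⟪x₂ - x₁, y - x⟫ with hc
  have key : ∀ x' : Plane, ⟪x' - x, y - x⟫ ≤ 0 →
      Wcap V w x y ≤ Wstar V w R x' := by
    intro x' hs
    obtain ⟨y', hdist, hiff⟩ := prune x y x' hxy hs
    have hWeq : Wcap V w x y = Wcap V w x' y' := by
      unfold Wcap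
      exact Finset.sum_congr rfl fun v _ => by rw [if_congr (hiff v) rfl rfl]
    rw [hWeq]
    exact le_csSup (Wstar_bddAbove V w hw R x')
      ⟨y', Set.mem_setOf_eq ▸ le_trans hdxy hdist, rfl⟩
  rcases le_or_gt 0 c with hcc | hcc
  · refine le_trans (key x₁ ?_) (le_max_left _ _)
    rw [h1, real_inner_smul_left, ← hc]
    nlinarith
  · refine le_trans (key x₂ ?_) (le_max_right _ _)
    rw [h2, real_inner_smul_left, ← hc]
    nlinarith
end
end

section
/- Let x₁ and x₂ be two points on a vertical line L with x₁ strictly above x₂. For any angle θ ∈ [0, π] (direction u_θ = (cos θ, sin θ)), the capture of the follower at x₁ + R·u_θ against x₁ is at most the capture at x₂ + R·u_θ against x₂: W(x₁, θ) ≤ W(x₂, θ). Symmetrically, for θ ∈ [π, 2π], W(x₂, θ) ≤ W(x₁, θ). -/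
open scoped RealInnerProductSpace

noncomputable section

lemma dist_key (x c v : Plane) :
    dist v (x + c) < dist v x ↔ ‖c‖ ^ 2 < 2 * ⟪v - x, c⟫ := by
  rw [dist_eq_norm, dist_eq_norm]
  have h1 : v - (x + c) = (v - x) - c := by abel
  have h2 : ‖(v - x) - c‖ ^ 2 = ‖v - x‖ ^ 2 - 2 * ⟪v - x, c⟫ + ‖c‖ ^ 2 :=
    norm_sub_sq_real _ _
  constructor
  · intro h
    have := pow_lt_pow_left₀ h (norm_nonneg _) two_ne_zero
    rw [h1, h2] at this
    linarith
  · intro h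
    have hsq : ‖v - (x + c)‖ ^ 2 < ‖v - x‖ ^ 2 := by rw [h1, h2]; linarith
    exact lt_of_pow_lt_pow_left₀ 2 (norm_nonneg _) hsq

lemma inner_pt_dir (t θ : ℝ) : ⟪(pt 0 t : Plane), dir θ⟫ = t * Real.sin θ := by
  simp [pt, dir, PiLp.inner_apply, Fin.sum_univ_two,
    RCLike.inner_apply]
  ring

/-- shift lemma on a vertical line. If `x₁` is strictly above `x₂`, then
for angles `θ ∈ [0, π]` the capture at `x₁` is at most that at `x₂`, and symmetrically
for `θ ∈ [π, 2π]`. -/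
theorem stmt_9 (V : Finset Plane) (w : Plane → ℝ) (hw : ∀ v ∈ V, 0 < w v)
    (R : ℝ) (hR : 0 < R) (x₁ x₂ : Plane) (t : ℝ) (ht : 0 < t) (hx : x₁ = x₂ + pt 0 t)
    (θ : ℝ) :
    (0 ≤ θ → θ ≤ Real.pi → Wang V w R x₁ θ ≤ Wang V w R x₂ θ) ∧
    (Real.pi ≤ θ → θ ≤ 2 * Real.pi → Wang V w R x₂ θ ≤ Wang V w R x₁ θ) := by
  have hinner : ∀ v : Plane,
      ⟪v - x₁, R • dir θ⟫ = ⟪v - x₂, R • dir θ⟫ - R * (t * Real.sin θ) := by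
    intro v
    have : v - x₁ = (v - x₂) - pt 0 t := by rw [hx]; abel
    rw [this, inner_sub_left, real_inner_smul_right, real_inner_smul_right, inner_pt_dir]
  constructor
  · intro h0 hpi
    have hs : 0 ≤ Real.sin θ := Real.sin_nonneg_of_nonneg_of_le_pi h0 hpi
    unfold Wang Wcap
    apply Finset.sum_le_sum
    intro v hv
    by_cases h : dist v (x₁ + R • dir θ) < dist v x₁
    · rw [if_pos h, if_pos]
      rw [dist_key] at h ⊢
      have := hinner v
      nlinarith [mul_nonneg (mul_nonneg ht.le hs) hR.le]
    · rw [if_neg h]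
      split
      · exact (hw v hv).le
      · exact le_rfl
  · intro hpi h2pi
    have hs : Real.sin θ ≤ 0 := by
      have : Real.sin (θ - 2 * Real.pi) ≤ 0 :=
        Real.sin_nonpos_of_nonpos_of_neg_pi_le (by linarith) (by linarith [Real.pi_pos])
      rwa [Real.sin_sub_two_pi] at this
    unfold Wang Wcap
    apply Finset.sum_le_sum
    intro v hv
    by_cases h : dist v (x₂ + R • dir θ) < dist v x₂
    · rw [if_pos h, if_pos]
      rw [dist_key] at h ⊢
      have := hinner v
      nlinarith [mul_nonneg (mul_nonneg hR.le ht.le) (neg_nonneg.mpr hs)]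
    · rw [if_neg h]
      split
      · exact (hw v hv).le
      · exact le_rfl
end
end

section
/- If x is a point whose set of maximizing directions MA(x) is not contained in any closed half-circle (equivalently, the minimal arc CA(x) covering MA(x) has angular span > π), then x is a (1|1)_R-centroid: W*(x) ≤ W*(x') for every point x'. -/
open scoped RealInnerProductSpace

noncomputable section

lemma pt_apply_zero (a b : ℝ) : pt a b 0 = a := rfl
lemma pt_apply_one (a b : ℝ) : pt a b 1 = b := rfl

lemma inner_dir (u : Plane) (θ : ℝ) :
    ⟪u, dir θ⟫ = u 0 * Real.cos θ + u 1 * Real.sin θ := by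
  simp [PiLp.inner_apply, Fin.sum_univ_two, RCLike.inner_apply, dir, pt_apply_zero,
    pt_apply_one]
  ring

lemma cap_iff (R : ℝ) (hR : 0 < R) (x y d : Plane) (hd : ‖d‖ = 1) :
    dist y (x + R • d) < dist y x ↔ R / 2 < ⟪y - x, d⟫ := by
  rw [dist_eq_norm, dist_eq_norm,
    show y - (x + R • d) = (y - x) - R • d by abel]
  have hsq : ‖(y - x) - R • d‖ ^ 2
      = ‖y - x‖ ^ 2 - 2 * (R * ⟪y - x, d⟫) + R ^ 2 := by
    rw [norm_sub_sq_real, real_inner_smul_right, norm_smul, hd, Real.norm_eq_abs,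
      abs_of_pos hR]
    ring
  constructor
  · intro h
    have := mul_self_lt_mul_self (norm_nonneg _) h
    nlinarith
  · intro h
    refine lt_of_pow_lt_pow_left₀ 2 (norm_nonneg _) ?_
    nlinarith

lemma Wang_bdd (V : Finset Plane) (w : Plane → ℝ) (hw : ∀ v ∈ V, 0 < w v)
    (R : ℝ) (x : Plane) : BddAbove (Set.range (Wang V w R x)) := by
  refine ⟨∑ v ∈ V, w v, ?_⟩
  rintro _ ⟨θ, rfl⟩
  refine Finset.sum_le_sum fun v hv => ?_
  split_ifs
  · exact le_rfl
  · exact (hw v hv).le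

/-- if the maximizing directions of `x` are not contained in any closed
half-circle, then `x` is a `(1|1)_R`-centroid. -/
theorem stmt_11 (V : Finset Plane) (w : Plane → ℝ) (hw : ∀ v ∈ V, 0 < w v)
    (R : ℝ) (hR : 0 < R) (x : Plane)
    (hMA : ∀ φ : ℝ, ∃ θ : ℝ,
      (∀ θ' : ℝ, Wang V w R x θ' ≤ Wang V w R x θ) ∧ Real.cos (θ - φ) < 0) :
    ∀ x' : Plane, WstarC V w R x ≤ WstarC V w R x' := by
  intro x'
  by_cases hxx : x' = x
  · subst hxx; exact le_rfl
  · set u : Plane := x' - x with hu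
    have hune : u ≠ 0 := sub_ne_zero.mpr hxx
    set z : ℂ := ⟨u 0, u 1⟩ with hz
    have hzne : z ≠ 0 := by
      intro h
      apply hune
      have h0 : u 0 = 0 := congrArg Complex.re h
      have h1 : u 1 = 0 := congrArg Complex.im h
      ext i
      fin_cases i <;> simp [h0, h1]
    obtain ⟨θ, hmax, hcos⟩ := hMA z.arg
    have habs : 0 < ‖z‖ := by
      exact norm_pos_iff.mpr hzne
    have hinner : ⟪u, dir θ⟫ < 0 := by
      have hc := Complex.cos_arg hzne
      have hs := Complex.sin_arg z
      rw [inner_dir]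
      have h0 : u 0 = ‖z‖ * Real.cos z.arg := by
        rw [hc, show z.re = u 0 from rfl]
        field_simp
      have h1 : u 1 = ‖z‖ * Real.sin z.arg := by
        rw [hs, show z.im = u 1 from rfl]
        field_simp
      rw [h0, h1]
      have : ‖z‖ * Real.cos z.arg * Real.cos θ
          + ‖z‖ * Real.sin z.arg * Real.sin θ
          = ‖z‖ * Real.cos (θ - z.arg) := by
        rw [Real.cos_sub]; ring
      rw [this]
      exact mul_neg_of_pos_of_neg habs hcos
    have step1 : WstarC V w R x ≤ Wang V w R x θ := by
      refine csSup_le (Set.range_nonempty _) ?_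
      rintro _ ⟨θ', rfl⟩
      exact hmax θ'
    have step2 : Wang V w R x θ ≤ Wang V w R x' θ := by
      unfold Wang Wcap
      refine Finset.sum_le_sum fun v hv => ?_
      by_cases hcap : dist v (x + R • dir θ) < dist v x
      · have h1 : R / 2 < ⟪v - x, dir θ⟫ :=
          (cap_iff R hR x v (dir θ) (norm_dir θ)).mp hcap
        have h2 : R / 2 < ⟪v - x', dir θ⟫ := by
          have : v - x' = (v - x) - u := by rw [hu]; abel
          rw [this, inner_sub_left]
          linarith
        have hcap' : dist v (x' + R • dir θ) < dist v x' :=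
          (cap_iff R hR x' v (dir θ) (norm_dir θ)).mpr h2
        rw [if_pos hcap, if_pos hcap']
      · rw [if_neg hcap]
        split_ifs
        · exact (hw v hv).le
        · exact le_rfl
    have step3 : Wang V w R x' θ ≤ WstarC V w R x' :=
      le_csSup (Wang_bdd V w hw R x') ⟨θ, rfl⟩
    linarith
end
end

section
/- Any point x outside the bounding box (the smallest axis-aligned rectangle containing all disks of radius R/2 around points of V) satisfies W*(x) = W(V), i.e., the follower can capture all customers. -/
open scoped RealInnerProductSpace

noncomputable section

lemma dist_step (x v : Plane) (i : Fin 2) (c : ℝ)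
    (h : c^2 < 2*c*(v i - x i)) :
    dist v (x + c • EuclideanSpace.single i (1:ℝ)) < dist v x := by
  set e : Plane := EuclideanSpace.single i (1:ℝ) with he
  have hne : ‖e‖ = 1 := by simp [he]
  have hvy : v - (x + c • e) = (v - x) - c • e := by abel
  have hinner : ⟪v - x, c • e⟫ = c * (v i - x i) := by
    rw [real_inner_smul_right, he, EuclideanSpace.inner_single_right]
    simp [mul_comm]
  have hsq : dist v (x + c • e) ^ 2 = dist v x ^ 2 - 2*c*(v i - x i) + c^2 := by
    rw [dist_eq_norm, dist_eq_norm, hvy, norm_sub_sq_real, hinner, norm_smul, hne,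
      Real.norm_eq_abs]
    rw [mul_one, sq_abs]; ring
  have : dist v (x + c • e) ^ 2 < dist v x ^ 2 := by rw [hsq]; linarith
  exact lt_of_pow_lt_pow_left₀ 2 dist_nonneg this

/-- any point strictly outside the bounding box of the disks of radius
`R/2` around `V` has weight loss `W(V)`: some feasible follower position captures all
customers. -/
theorem stmt_15 (V : Finset Plane) (w : Plane → ℝ) (hw : ∀ v ∈ V, 0 < w v)
    (R : ℝ) (hR : 0 < R) (x : Plane)
    (hx : ∃ i : Fin 2, (∀ v ∈ V, v i + R / 2 < x i) ∨ (∀ v ∈ V, x i < v i - R / 2)) :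
    (∃ y : Plane, R ≤ dist x y ∧ ∀ v ∈ V, dist v y < dist v x) ∧
    Wstar V w R x = ∑ v ∈ V, w v := by
  obtain ⟨i, hi⟩ := hx
  -- choose direction
  obtain ⟨c, hcR, hc⟩ : ∃ c : ℝ, |c| = R ∧ ∀ v ∈ V, c^2 < 2*c*(v i - x i) := by
    rcases hi with hi | hi
    · refine ⟨-R, by rw [abs_neg, abs_of_pos hR], fun v hv => ?_⟩
      have := hi v hv
      nlinarith
    · refine ⟨R, abs_of_pos hR, fun v hv => ?_⟩
      have := hi v hv
      nlinarith
  set y : Plane := x + c • EuclideanSpace.single i (1:ℝ) with hy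
  have hdxy : dist x y = R := by
    rw [hy, dist_eq_norm]
    have : x - (x + c • EuclideanSpace.single i (1:ℝ))
        = (-c) • EuclideanSpace.single i (1:ℝ) := by
      rw [neg_smul]; abel
    rw [this, norm_smul]
    simp [abs_of_pos hR, hcR]
  have hcap : ∀ v ∈ V, dist v y < dist v x := fun v hv => dist_step x v i c (hc v hv)
  have hWy : Wcap V w x y = ∑ v ∈ V, w v := by
    unfold Wcap
    exact Finset.sum_congr rfl fun v hv => if_pos (hcap v hv)
  refine ⟨⟨y, hdxy.ge, hcap⟩, ?_⟩
  have hbound : ∀ z ∈ Wcap V w x '' {y : Plane | R ≤ dist x y}, z ≤ ∑ v ∈ V, w v := by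
    rintro _ ⟨y', -, rfl⟩
    unfold Wcap
    refine Finset.sum_le_sum fun v hv => ?_
    split_ifs
    · exact le_rfl
    · exact (hw v hv).le
  unfold Wstar
  apply le_antisymm
  · exact Real.sSup_le hbound (Finset.sum_nonneg fun v hv => (hw v hv).le)
  · rw [← hWy]
    exact le_csSup ⟨_, hbound⟩ ⟨y, hdxy.ge, rfl⟩
end
end

section
/- Let x₁ be strictly above x₂ on a vertical line L, with W*(x₁) = W*(x₂), and suppose there exists θ ∈ (0,π) with θ ∈ MA(x₂) but MA(x₁) ∩ (0,π) = ∅. Then the convex hull CH(𝒞(S)) of the disks around S = {v : dist(v, y(x₂,θ)) < dist(v, x₂)} intersects the segment from x₁ to x₂ excluding x₂ — i.e., there is a point of the boundary of CH(𝒞(S)) on L lying in (x₂, x₁]. -/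
open scoped RealInnerProductSpace Pointwise

noncomputable section

lemma inner_two (x y : Plane) : ⟪x, y⟫ = x 0 * y 0 + x 1 * y 1 := by
  simp [PiLp.inner_apply, Fin.sum_univ_two]
  ring

lemma normsq_two (x : Plane) : ‖x‖^2 = (x 0)^2 + (x 1)^2 := by
  rw [EuclideanSpace.norm_eq, Real.sq_sqrt (by positivity)]
  simp [Fin.sum_univ_two]

lemma coord_abs_le_norm (x : Plane) (i : Fin 2) : |x i| ≤ ‖x‖ := by
  have h := normsq_two x
  have hn := norm_nonneg x
  have h0 : |x 0| ≤ ‖x‖ := by nlinarith [sq_abs (x 0), sq_nonneg (x 1), abs_nonneg (x 0)]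
  have h1 : |x 1| ≤ ‖x‖ := by nlinarith [sq_abs (x 1), sq_nonneg (x 0), abs_nonneg (x 1)]
  fin_cases i
  exacts [h0, h1]

lemma dir_norm (φ : ℝ) : ‖dir φ‖ = 1 := by
  have h := normsq_two (dir φ)
  have h2 : (dir φ) 0 = Real.cos φ := rfl
  have h3 : (dir φ) 1 = Real.sin φ := rfl
  rw [h2, h3] at h
  nlinarith [norm_nonneg (dir φ), Real.sin_sq_add_cos_sq φ]

lemma capture_iff {R : ℝ} (hR : 0 < R) {d : Plane} (hd : ‖d‖ = 1) (v x : Plane) :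
    dist v (x + R • d) < dist v x ↔ R / 2 < ⟪d, v - x⟫ := by
  have hrw : v - (x + R • d) = (v - x) - R • d := by abel
  have h1 : dist v (x + R • d) ^ 2 = dist v x ^ 2 - 2 * R * ⟪d, v - x⟫ + R ^ 2 := by
    rw [dist_eq_norm, dist_eq_norm, hrw, @norm_sub_sq_real, real_inner_smul_right,
      norm_smul, Real.norm_eq_abs, abs_of_pos hR, hd, real_inner_comm]
    ring
  constructor
  · intro h
    nlinarith [@dist_nonneg _ _ v (x + R • d), @dist_nonneg _ _ v x]
  · intro h
    nlinarith [@dist_nonneg _ _ v (x + R • d), @dist_nonneg _ _ v x]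

lemma union_balls (S : Set Plane) (r : ℝ) (hr : 0 ≤ r) :
    (⋃ v ∈ S, Metric.closedBall v r) = S + Metric.closedBall 0 r := by
  ext p
  simp only [Set.mem_iUnion, Metric.mem_closedBall, Set.mem_add, exists_prop]
  constructor
  · rintro ⟨v, hv, hp⟩
    exact ⟨v, hv, p - v, by simpa [dist_eq_norm, dist_comm p v] using hp, by abel⟩
  · rintro ⟨v, hv, b, hb, rfl⟩
    exact ⟨v, hv, by simpa [dist_eq_norm, dist_comm] using hb⟩

lemma cross (K : Set Plane) (hKcl : IsClosed K) (x₂ x₁ : Plane) (hx2 : x₂ ∉ K)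
    (s₀ : ℝ) (hs₀ : s₀ ∈ Set.Ioc (0:ℝ) 1) (hz : x₂ + s₀ • (x₁ - x₂) ∈ K) :
    ∃ s ∈ Set.Ioc (0:ℝ) 1, x₂ + s • (x₁ - x₂) ∈ frontier K := by
  set γ : ℝ → Plane := fun s => x₂ + s • (x₁ - x₂) with hγ
  have hγc : Continuous γ := by
    apply Continuous.add continuous_const
    exact Continuous.smul continuous_id continuous_const
  have hTcl : IsClosed (Set.Icc 0 s₀ ∩ γ ⁻¹' K) := isClosed_Icc.inter (hKcl.preimage hγc)
  have hTne : (Set.Icc 0 s₀ ∩ γ ⁻¹' K).Nonempty := ⟨s₀, ⟨le_of_lt hs₀.1, le_refl _⟩, hz⟩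
  have hTbdd : BddBelow (Set.Icc 0 s₀ ∩ γ ⁻¹' K) := ⟨0, fun s hs => hs.1.1⟩
  set m := sInf (Set.Icc 0 s₀ ∩ γ ⁻¹' K) with hm
  have hmT : m ∈ Set.Icc 0 s₀ ∩ γ ⁻¹' K := hTcl.csInf_mem hTne hTbdd
  have hm0 : 0 < m := by
    rcases eq_or_lt_of_le hmT.1.1 with h | h
    · exfalso; apply hx2
      have : γ m ∈ K := hmT.2
      rw [← h] at this
      simpa [γ] using this
    · exact h
  refine ⟨m, ⟨hm0, le_trans hmT.1.2 hs₀.2⟩, ?_⟩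
  rw [hKcl.frontier_eq]
  refine ⟨hmT.2, fun hint => ?_⟩
  rw [mem_interior_iff_mem_nhds, Metric.mem_nhds_iff] at hint
  obtain ⟨ε, hε, hball⟩ := hint
  set η := min m (ε / (‖x₁ - x₂‖ + 1)) with hη
  have hηpos : 0 < η := lt_min hm0 (by positivity)
  have hη1 : η ≤ m := min_le_left _ _
  have hη2 : η ≤ ε / (‖x₁ - x₂‖ + 1) := min_le_right _ _
  have hsT : (m - η/2) ∈ Set.Icc 0 s₀ ∩ γ ⁻¹' K := by
    refine ⟨⟨by linarith, by linarith [hmT.1.2]⟩, ?_⟩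
    apply hball
    have hd : dist (γ (m - η/2)) (γ m) = (η/2) * ‖x₁ - x₂‖ := by
      have : γ (m - η/2) - γ m = (-(η/2)) • (x₁ - x₂) := by
        simp only [γ]
        module
      rw [dist_eq_norm, this, norm_smul, Real.norm_eq_abs, abs_neg, abs_of_pos (by linarith)]
    show γ (m - η/2) ∈ Metric.ball (γ m) ε
    rw [Metric.mem_ball, hd]
    have h3 : (η/2) * ‖x₁ - x₂‖ < ε := by
      have h4 : η * (‖x₁ - x₂‖ + 1) ≤ ε := by
        rw [← le_div_iff₀ (by positivity)]; exact hη2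
      nlinarith [norm_nonneg (x₁ - x₂)]
    exact h3
  have := csInf_le hTbdd hsT
  linarith


set_option maxHeartbeats 1000000 in
/-- with `x₁` strictly above `x₂` on a vertical line, `W*(x₁) = W*(x₂)`,
some maximizing angle `θ ∈ (0,π)` for `x₂`, and no maximizing angle of `x₁` in `(0,π)`,
the boundary of `CH(𝒞(S))` (for `S` the set captured by `y(x₂,θ)`) meets the segment
from `x₂` to `x₁` excluding `x₂`. -/
theorem stmt_17 (V : Finset Plane) (w : Plane → ℝ) (hw : ∀ v ∈ V, 0 < w v)
    (R : ℝ) (hR : 0 < R) (x₁ x₂ : Plane) (t : ℝ) (ht : 0 < t) (hx : x₁ = x₂ + pt 0 t)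
    (heq : WstarC V w R x₁ = WstarC V w R x₂)
    (θ : ℝ) (hθ : θ ∈ Set.Ioo 0 Real.pi)
    (hθmax : Wang V w R x₂ θ = WstarC V w R x₂)
    (hMA1 : ∀ θ' ∈ Set.Ioo 0 Real.pi, Wang V w R x₁ θ' < WstarC V w R x₁) :
    ∃ s ∈ Set.Ioc (0 : ℝ) 1, x₂ + s • (x₁ - x₂) ∈ frontier (convexHull ℝ
      (⋃ v ∈ {v : Plane | v ∈ V ∧ dist v (x₂ + R • dir θ) < dist v x₂},
        Metric.closedBall v (R / 2))) := by
  by_contra hcon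
  push_neg at hcon
  obtain ⟨hθ0, hθπ⟩ := hθ
  have hsinθ : 0 < Real.sin θ := Real.sin_pos_of_pos_of_lt_pi hθ0 hθπ
  set S : Set Plane := {v : Plane | v ∈ V ∧ dist v (x₂ + R • dir θ) < dist v x₂} with hSdef
  set K : Set Plane := convexHull ℝ (⋃ v ∈ S, Metric.closedBall v (R / 2)) with hKdef
  have hr2 : (0:ℝ) ≤ R / 2 := by linarith
  have hSfin : S.Finite := Set.Finite.subset V.finite_toSet (fun v hv => hv.1)
  have hKcompact : IsCompact K := by
    rw [hKdef, union_balls S (R/2) hr2, convexHull_add,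
      (convex_closedBall (0:Plane) (R/2)).convexHull_eq]
    exact (hSfin.isCompact_convexHull (𝕜 := ℝ)).add (isCompact_closedBall _ _)
  have hKclosed : IsClosed K := hKcompact.isClosed
  have hKconv : Convex ℝ K := convex_convexHull ℝ _
  have hScapt : ∀ v ∈ S, R / 2 < ⟪dir θ, v - x₂⟫ := fun v hv =>
    (capture_iff hR (dir_norm θ) v x₂).mp hv.2
  -- K sits in the open halfplane through x₂ with normal dir θ
  have hhalf : ∀ p ∈ K, 0 < ⟪dir θ, p - x₂⟫ := by
    intro p hp
    have hsub : (⋃ v ∈ S, Metric.closedBall v (R / 2)) ⊆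
        {q : Plane | ⟪dir θ, x₂⟫ < ⟪dir θ, q⟫} := by
      rintro q hq
      simp only [Set.mem_iUnion, exists_prop] at hq
      obtain ⟨v, hv, hqv⟩ := hq
      have h1 := hScapt v hv
      have h2 : |⟪dir θ, q - v⟫| ≤ R / 2 := by
        calc |⟪dir θ, q - v⟫| ≤ ‖dir θ‖ * ‖q - v‖ := abs_real_inner_le_norm _ _
          _ ≤ R / 2 := by
            rw [dir_norm, one_mul, ← dist_eq_norm]
            exact Metric.mem_closedBall.mp hqv
      have h3 : ⟪dir θ, q - x₂⟫ = ⟪dir θ, v - x₂⟫ + ⟪dir θ, q - v⟫ := by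
        rw [← inner_add_right]
        congr 1
        abel
      have h4 : 0 < ⟪dir θ, q - x₂⟫ := by
        rcases abs_le.mp h2 with ⟨hl, _⟩
        rw [h3]; linarith
      rw [inner_sub_right] at h4
      exact Set.mem_setOf.mpr (by linarith)
    have hconvH : Convex ℝ {q : Plane | ⟪dir θ, x₂⟫ < ⟪dir θ, q⟫} :=
      convex_halfSpace_gt ⟨fun a b => inner_add_right _ _ _,
        fun c a => real_inner_smul_right _ _ _⟩ _
    have hmem := convexHull_min hsub hconvH hp
    rw [inner_sub_right]
    have : ⟪dir θ, x₂⟫ < ⟪dir θ, p⟫ := hmem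
    linarith
  have hx2K : x₂ ∉ K := by
    intro h
    have := hhalf x₂ h
    simp at this
  have hx0 : x₁ 0 = x₂ 0 := by
    rw [hx]; show x₂ 0 + (0:ℝ) = x₂ 0; ring
  have hx1 : x₁ 1 = x₂ 1 + t := by
    rw [hx]; rfl
  -- the segment misses K
  have hseg : ∀ s ∈ Set.Ioc (0:ℝ) 1, x₂ + s • (x₁ - x₂) ∉ K := by
    intro s hs hmem
    obtain ⟨s', hs', hfr⟩ := cross K hKclosed x₂ x₁ hx2K s hs hmem
    exact hcon s' hs' hfr
  -- the downward ray from x₁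
  set Ray : Set Plane := {p : Plane | p 0 = x₁ 0 ∧ p 1 ≤ x₁ 1} with hRaydef
  have hRayconv : Convex ℝ Ray := by
    intro p hp q hq a b ha hb hab
    refine ⟨?_, ?_⟩
    · show a * p 0 + b * q 0 = x₁ 0
      rw [hp.1, hq.1, ← add_mul, hab, one_mul]
    · show a * p 1 + b * q 1 ≤ x₁ 1
      calc a * p 1 + b * q 1 ≤ a * x₁ 1 + b * x₁ 1 := by
            apply add_le_add
            · exact mul_le_mul_of_nonneg_left hp.2 ha
            · exact mul_le_mul_of_nonneg_left hq.2 hb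
        _ = x₁ 1 := by rw [← add_mul, hab, one_mul]
  have hRayclosed : IsClosed Ray := by
    have h1 : IsClosed {p : Plane | p 0 = x₁ 0} :=
      isClosed_eq (EuclideanSpace.proj (0 : Fin 2) : Plane →L[ℝ] ℝ).continuous continuous_const
    have h2 : IsClosed {p : Plane | p 1 ≤ x₁ 1} :=
      isClosed_le (EuclideanSpace.proj (1 : Fin 2) : Plane →L[ℝ] ℝ).continuous continuous_const
    exact h1.inter h2
  have hdisj : Disjoint K Ray := by
    rw [Set.disjoint_left]
    intro p hpK hpRay
    obtain ⟨hp0, hp1⟩ := hpRay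
    rcases le_or_gt (p 1) (x₂ 1) with h | h
    · have hpos := hhalf p hpK
      have hinner : ⟪dir θ, p - x₂⟫ =
          Real.cos θ * (p 0 - x₂ 0) + Real.sin θ * (p 1 - x₂ 1) := inner_two _ _
      rw [hinner, hp0, hx0] at hpos
      nlinarith
    · set s := (p 1 - x₂ 1) / t with hs_def
      have hs : s ∈ Set.Ioc (0:ℝ) 1 :=
        ⟨div_pos (by linarith) ht, by rw [div_le_one ht]; linarith [hp1, hx1.le]⟩
      apply hseg s hs
      have hps : x₂ + s • (x₁ - x₂) = p := by
        ext i
        fin_cases i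
        · show x₂ 0 + s * (x₁ 0 - x₂ 0) = p 0
          rw [hx0, hp0, hx0]; ring
        · show x₂ 1 + s * (x₁ 1 - x₂ 1) = p 1
          rw [hx1, hs_def]; field_simp; ring
      rw [hps]; exact hpK
  -- separation
  obtain ⟨f, a, b, hfa, hab, hfb⟩ :=
    geometric_hahn_banach_compact_closed hKconv hKcompact hRayconv hRayclosed hdisj
  have hfx1 : b < f x₁ := hfb x₁ ⟨rfl, le_refl _⟩
  have hfe2 : f (pt 0 1) ≤ 0 := by
    by_contra hpos
    push_neg at hpos
    set s := (f x₁ - b) / f (pt 0 1) with hs_def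
    have hmem : x₁ - s • pt 0 1 ∈ Ray := by
      refine ⟨?_, ?_⟩
      · show x₁ 0 - s * (0:ℝ) = x₁ 0; ring
      · show x₁ 1 - s * (1:ℝ) ≤ x₁ 1
        have : 0 ≤ s := le_of_lt (div_pos (by linarith) hpos)
        linarith
    have hgt := hfb _ hmem
    rw [map_sub, map_smul, smul_eq_mul] at hgt
    have hsf : s * f (pt 0 1) = f x₁ - b := by
      rw [hs_def]; field_simp
    linarith
  set u : Plane := (InnerProductSpace.toDual ℝ Plane).symm f with hu_def
  have hu : ∀ p : Plane, ⟪u, p⟫ = f p := fun p => InnerProductSpace.toDual_symm_apply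
  have hba : 0 < b - a := by linarith
  -- bound on K
  obtain ⟨r, hr⟩ : ∃ r, K ⊆ Metric.closedBall x₁ r :=
    hKcompact.isBounded.subset_closedBall x₁
  set M : ℝ := max r 0 with hMdef
  have hM0 : 0 ≤ M := le_max_right r 0
  have hM : ∀ p ∈ K, |p 1 - x₁ 1| ≤ M := by
    intro p hp
    have h1 : |(p - x₁) 1| ≤ ‖p - x₁‖ := coord_abs_le_norm _ _
    have h2 : ‖p - x₁‖ ≤ r := by
      have := hr hp
      rwa [Metric.mem_closedBall, dist_eq_norm] at this
    have h3 : (p - x₁) 1 = p 1 - x₁ 1 := rfl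
    rw [h3] at h1
    exact le_trans h1 (le_trans h2 (le_max_left r 0))
  set δ : ℝ := (b - a) / (2 * (M + 1)) with hδdef
  have hδpos : 0 < δ := div_pos hba (by linarith)
  set u' : Plane := -u + δ • pt 0 1 with hu'def
  have hsep : ∀ p ∈ K, (b - a) / 2 < ⟪u', p - x₁⟫ := by
    intro p hp
    have e2 : ⟪(pt 0 1 : Plane), p - x₁⟫ = p 1 - x₁ 1 := by
      rw [inner_two]
      show 0 * ((p - x₁) 0) + 1 * ((p - x₁) 1) = p 1 - x₁ 1
      have h3 : (p - x₁) 1 = p 1 - x₁ 1 := rfl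
      rw [h3]; ring
    have e1 : ⟪u', p - x₁⟫ = -(f p - f x₁) + δ * (p 1 - x₁ 1) := by
      rw [hu'def, inner_add_left, inner_neg_left, hu, map_sub, real_inner_smul_left, e2]
    have h1 : f p < a := hfa p hp
    have h2 := abs_le.mp (hM p hp)
    have h3 : δ * M ≤ (b - a) / 2 := by
      rw [hδdef, div_mul_eq_mul_div, div_le_div_iff₀ (by linarith) (by norm_num)]
      nlinarith
    have h4 : δ * (-M) ≤ δ * (p 1 - x₁ 1) := mul_le_mul_of_nonneg_left h2.1 hδpos.le
    have h5 : δ * (-M) = -(δ * M) := by ring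
    rw [e1]
    linarith [h4, h5]
  have hu'1 : 0 < u' 1 := by
    have e1 : u' 1 = -(u 1) + δ * 1 := rfl
    have hu1 : u 1 = f (pt 0 1) := by
      have h := hu (pt 0 1)
      rw [inner_two, show (pt 0 1 : Plane) 0 = 0 from rfl,
        show (pt 0 1 : Plane) 1 = 1 from rfl] at h
      linarith [h]
    rw [e1, hu1]
    linarith
  have hn : 0 < ‖u'‖ :=
    lt_of_lt_of_le (lt_of_lt_of_le hu'1 (le_abs_self _)) (coord_abs_le_norm u' 1)
  set n : ℝ := ‖u'‖ with hndef
  set c : ℝ := u' 0 / n with hcdef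
  have hnsq : (u' 0)^2 + (u' 1)^2 = n^2 := (normsq_two u').symm
  have hc2 : c^2 < 1 := by
    rw [hcdef, div_pow, div_lt_one (by positivity)]
    have h9 : 0 < (u' 1)^2 := pow_pos hu'1 2
    linarith only [hnsq, h9]
  have habs : |c| < 1 := by
    have := abs_nonneg c
    nlinarith only [hc2, this, sq_abs c]
  obtain ⟨hcl, hcu⟩ := abs_lt.mp habs
  set θ' : ℝ := Real.arccos c with hθ'def
  have hθ'mem : θ' ∈ Set.Ioo 0 Real.pi :=
    ⟨Real.arccos_pos.2 hcu, lt_of_le_of_ne (Real.arccos_le_pi c)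
      (fun h => absurd (Real.arccos_eq_pi.mp h) (by linarith))⟩
  have hdir' : dir θ' = n⁻¹ • u' := by
    have hcos : Real.cos θ' = c := Real.cos_arccos (by linarith) (by linarith)
    have hsin : Real.sin θ' = u' 1 / n := by
      rw [hθ'def, Real.sin_arccos]
      have he : 1 - c^2 = (u' 1 / n)^2 := by
        rw [hcdef, div_pow, div_pow]
        field_simp
        nlinarith
      rw [he, Real.sqrt_sq (by positivity)]
    ext i
    fin_cases i
    · show Real.cos θ' = n⁻¹ * u' 0
      rw [hcos, hcdef]; ring
    · show Real.sin θ' = n⁻¹ * u' 1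
      rw [hsin]; ring
  have hcapt : ∀ v ∈ S, dist v (x₁ + R • dir θ') < dist v x₁ := by
    intro v hv
    rw [capture_iff hR (dir_norm θ') v x₁]
    have hpK : v - (R/2) • dir θ' ∈ K := by
      apply subset_convexHull ℝ _
      apply Set.mem_biUnion hv
      rw [Metric.mem_closedBall, dist_eq_norm]
      have h4 : v - (R/2) • dir θ' - v = -((R/2) • dir θ') := by abel
      rw [h4, norm_neg, norm_smul, dir_norm, Real.norm_eq_abs, abs_of_nonneg hr2, mul_one]
    have h1 := hsep _ hpK
    have e1 : ⟪u', v - (R/2) • dir θ' - x₁⟫ = ⟪u', v - x₁⟫ - (R/2) * ⟪u', dir θ'⟫ := by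
      rw [show v - (R/2) • dir θ' - x₁ = (v - x₁) - (R/2) • dir θ' by abel,
        inner_sub_right, real_inner_smul_right]
    have e2 : ⟪u', dir θ'⟫ = n := by
      rw [hdir', real_inner_smul_right, real_inner_self_eq_norm_sq, ← hndef]
      field_simp
    rw [e1, e2] at h1
    have h2 : ⟪dir θ', v - x₁⟫ = n⁻¹ * ⟪u', v - x₁⟫ := by
      rw [hdir', real_inner_smul_left]
    rw [h2]
    have h3 : (R/2) * n < ⟪u', v - x₁⟫ := by linarith
    calc R/2 = n⁻¹ * ((R/2) * n) := by field_simp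
      _ < n⁻¹ * ⟪u', v - x₁⟫ := by
          exact mul_lt_mul_of_pos_left h3 (by positivity)
  have hWW : Wang V w R x₂ θ ≤ Wang V w R x₁ θ' := by
    unfold Wang Wcap
    apply Finset.sum_le_sum
    intro v hv
    by_cases h : dist v (x₂ + R • dir θ) < dist v x₂
    · rw [if_pos h, if_pos (hcapt v ⟨hv, h⟩)]
    · rw [if_neg h]
      split_ifs with h2
      · exact le_of_lt (hw v hv)
      · exact le_refl _
  have hfinal := hMA1 θ' hθ'mem
  rw [heq, ← hθmax] at hfinal
  linarith
end
end

section
/- Fix a point v and a ray direction: for the family of 'right' outer tangent lines T_r(v, v_i) of the two disks of radius r = R/2 centered at v and at v_i (v_i ranging over points with polar angle w.r.t. v in an open half-circle (θ_L, θ_L + π), where θ_L is the upward direction of a vertical line L not intersecting the disk around v), the intersection points of these tangent lines with L are ordered by decreasing y-coordinate exactly according to the counterclockwise order of the polar angles of the v_i with respect to v. -/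
open scoped RealInnerProductSpace

noncomputable section

lemma key_aux (r a δ μ : ℝ) (hr : 0 < r) (ha : r < a) (hδ : 0 < δ)
    (h1 : Real.pi / 2 < μ - δ) (h2 : μ + δ < 3 * Real.pi / 2) :
    0 < a * Real.cos δ + r * Real.sin μ := by
  have hδ2 : δ < Real.pi / 2 := by linarith
  have hcδ : 0 < Real.cos δ :=
    Real.cos_pos_of_mem_Ioo ⟨by linarith [Real.pi_pos], hδ2⟩
  rcases le_or_gt 0 (Real.sin μ) with h | h
  · nlinarith
  · have h3 : Real.cos (3 * Real.pi / 2 - μ) = -Real.sin μ := by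
      have hh : 3 * Real.pi / 2 - μ = Real.pi + (Real.pi / 2 - μ) := by ring
      rw [hh, Real.cos_add, Real.cos_pi_div_two_sub]; simp
    have h4 : Real.cos (3 * Real.pi / 2 - μ) < Real.cos δ := by
      apply Real.strictAntiOn_cos ⟨le_of_lt hδ, by linarith⟩
        ⟨by linarith, by linarith⟩ (by linarith)
    rw [h3] at h4
    nlinarith

lemma tangent_y (r c : ℝ) (v : Plane) (θ ρ s : ℝ) (hρ : 0 < ρ)
    (hc : Real.cos θ < 0) (p : Plane)
    (hs : p = v + r • pt (Real.sin θ) (-Real.cos θ) + s • (ρ • dir θ))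
    (hpL : p 0 = c) :
    p 1 = v 1 - (r + (v 0 - c) * Real.sin θ) / Real.cos θ := by
  have h0 : p 0 = v 0 + r * Real.sin θ + s * (ρ * Real.cos θ) := by
    rw [hs]
    simp [pt, dir, PiLp.add_apply, PiLp.smul_apply, smul_eq_mul,
      WithLp.equiv_symm_apply]
  have h1 : p 1 = v 1 + r * (-Real.cos θ) + s * (ρ * Real.sin θ) := by
    rw [hs]
    simp [pt, dir, PiLp.add_apply, PiLp.smul_apply, smul_eq_mul,
      WithLp.equiv_symm_apply]
  have e1 : s * (ρ * Real.cos θ) = -((v 0 - c) + r * Real.sin θ) := by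
    rw [hpL] at h0; linarith
  have hc0 : Real.cos θ ≠ 0 := ne_of_lt hc
  have pyth := Real.sin_sq_add_cos_sq θ
  rw [h1]
  field_simp
  linear_combination Real.sin θ * e1 - r * pyth

/-- ordering of intersections of right outer tangent lines with a vertical
line `L = {p | p.x = c}` disjoint from the disk around `v` (which is strictly to the
right of `L`): for polar angles `θi < θj` in the open half-circle `(π/2, 3π/2)`,
the tangent line for `vi` meets `L` strictly above that for `vj`. -/
theorem stmt_18 (r : ℝ) (hr : 0 < r) (c : ℝ) (v : Plane) (hv : r < v 0 - c)
    (vi vj : Plane) (ρi ρj θi θj : ℝ) (hρi : 0 < ρi) (hρj : 0 < ρj)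
    (hθi : θi ∈ Set.Ioo (Real.pi / 2) (3 * Real.pi / 2))
    (hθj : θj ∈ Set.Ioo (Real.pi / 2) (3 * Real.pi / 2))
    (hij : θi < θj)
    (hvi : vi = v + ρi • dir θi) (hvj : vj = v + ρj • dir θj)
    (p q : Plane)
    (hp : ∃ s : ℝ, p = v + r • pt (Real.sin θi) (-Real.cos θi) + s • (vi - v))
    (hpL : p 0 = c)
    (hq : ∃ s : ℝ, q = v + r • pt (Real.sin θj) (-Real.cos θj) + s • (vj - v))
    (hqL : q 0 = c) :
    q 1 < p 1 := by
  obtain ⟨s, hs⟩ := hp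
  obtain ⟨t, ht⟩ := hq
  rw [hvi, add_sub_cancel_left] at hs
  rw [hvj, add_sub_cancel_left] at ht
  have hci : Real.cos θi < 0 :=
    Real.cos_neg_of_pi_div_two_lt_of_lt hθi.1 (by linarith [hθi.2])
  have hcj : Real.cos θj < 0 :=
    Real.cos_neg_of_pi_div_two_lt_of_lt hθj.1 (by linarith [hθj.2])
  have hp1 := tangent_y r c v θi ρi s hρi hci p hs hpL
  have hq1 := tangent_y r c v θj ρj t hρj hcj q ht hqL
  set a := v 0 - c with ha
  set δ := (θj - θi) / 2 with hδdef
  set μ := (θi + θj) / 2 with hμdef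
  have hδ : 0 < δ := by rw [hδdef]; linarith
  have hkey : 0 < a * Real.cos δ + r * Real.sin μ := by
    apply key_aux r a δ μ hr hv hδ
    · rw [hμdef, hδdef]; linarith [hθi.1]
    · rw [hμdef, hδdef]; linarith [hθj.2]
  have hsδ : 0 < Real.sin δ := by
    apply Real.sin_pos_of_pos_of_lt_pi hδ
    rw [hδdef]; linarith [hθi.1, hθj.2]
  have hN : 0 < (r + a * Real.sin θj) * Real.cos θi
      - (r + a * Real.sin θi) * Real.cos θj := by
    have hθie : θi = μ - δ := by rw [hμdef, hδdef]; ring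
    have hθje : θj = μ + δ := by rw [hμdef, hδdef]; ring
    have e : (r + a * Real.sin θj) * Real.cos θi
        - (r + a * Real.sin θi) * Real.cos θj
        = 2 * Real.sin δ * (a * Real.cos δ + r * Real.sin μ) := by
      rw [hθie, hθje, Real.sin_add, Real.sin_sub, Real.cos_add, Real.cos_sub]
      linear_combination (2 * a * Real.sin δ * Real.cos δ) * Real.sin_sq_add_cos_sq μ
    rw [e]
    positivity
  have hprod : 0 < Real.cos θi * Real.cos θj := mul_pos_of_neg_of_neg hci hcj
  have hpq : (p 1 - q 1) * (Real.cos θi * Real.cos θj)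
      = (r + a * Real.sin θj) * Real.cos θi - (r + a * Real.sin θi) * Real.cos θj := by
    have hci0 : Real.cos θi ≠ 0 := ne_of_lt hci
    have hcj0 : Real.cos θj ≠ 0 := ne_of_lt hcj
    rw [hp1, hq1]
    field_simp
    ring
  nlinarith [hN, hpq, hprod]
end
end

section
/- Suppose x lies on vertical line L, is not a strong centroid (its covering arc span ≤ π), Wedge(x) is upward (CA(x) ⊆ (0,π)), and θ is an angle in [π, 2π] such that the closed half-plane H(B(x,θ), y(x,θ)) beyond the bisector has weight ≥ W₁ ≥ W*(x). Define PW(x) = Wedge(x) ∩ H(F(x,θ), y(x,θ)). Then every point x' ∉ PW(x) satisfies W*(x') ≥ W*(x). -/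
open scoped RealInnerProductSpace

noncomputable section

lemma dist_shift_lt (v z : Plane) (R : ℝ) (hR : 0 < R) (θ : ℝ) :
    dist v (z + R • dir θ) < dist v z ↔ R / 2 < ⟪v - z, dir θ⟫ := by
  rw [dist_eq_norm, dist_eq_norm, show v - (z + R • dir θ) = (v - z) - R • dir θ by abel]
  have e : ‖(v - z) - R • dir θ‖ ^ 2 = ‖v - z‖ ^ 2 - 2 * R * ⟪v - z, dir θ⟫ + R ^ 2 := by
    rw [norm_sub_sq_real, real_inner_smul_right, norm_smul, norm_dir]
    rw [Real.norm_eq_abs, abs_of_pos hR]; ring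
  constructor
  · intro h
    nlinarith [norm_nonneg ((v - z) - R • dir θ), norm_nonneg (v - z)]
  · intro h
    nlinarith [norm_nonneg ((v - z) - R • dir θ), norm_nonneg (v - z)]

lemma dist_shift_le (v z : Plane) (R : ℝ) (hR : 0 < R) (θ : ℝ) :
    dist v (z + R • dir θ) ≤ dist v z ↔ R / 2 ≤ ⟪v - z, dir θ⟫ := by
  rw [dist_eq_norm, dist_eq_norm, show v - (z + R • dir θ) = (v - z) - R • dir θ by abel]
  have e : ‖(v - z) - R • dir θ‖ ^ 2 = ‖v - z‖ ^ 2 - 2 * R * ⟪v - z, dir θ⟫ + R ^ 2 := by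
    rw [norm_sub_sq_real, real_inner_smul_right, norm_smul, norm_dir]
    rw [Real.norm_eq_abs, abs_of_pos hR]; ring
  constructor
  · intro h
    nlinarith [norm_nonneg ((v - z) - R • dir θ), norm_nonneg (v - z)]
  · intro h
    nlinarith [norm_nonneg ((v - z) - R • dir θ), norm_nonneg (v - z)]

lemma wang_bddAbove (V : Finset Plane) (w : Plane → ℝ) (hw : ∀ v ∈ V, 0 < w v)
    (R : ℝ) (z : Plane) : BddAbove (Set.range (Wang V w R z)) := by
  refine ⟨∑ v ∈ V, w v, ?_⟩
  rintro r ⟨t, rfl⟩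
  refine Finset.sum_le_sum fun v hv => ?_
  split_ifs
  · exact le_rfl
  · exact (hw v hv).le

lemma wang_mono (V : Finset Plane) (w : Plane → ℝ) (hw : ∀ v ∈ V, 0 < w v)
    (R : ℝ) (hR : 0 < R) (x x' : Plane) (t : ℝ) (h : ⟪x' - x, dir t⟫ ≤ 0) :
    Wang V w R x t ≤ Wang V w R x' t := by
  refine Finset.sum_le_sum fun v hv => ?_
  by_cases hc : dist v (x + R • dir t) < dist v x
  · have h1 : R / 2 < ⟪v - x, dir t⟫ := (dist_shift_lt v x R hR t).mp hc
    have h2 : R / 2 < ⟪v - x', dir t⟫ := by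
      have : v - x' = (v - x) - (x' - x) := by abel
      rw [this, inner_sub_left]; linarith
    rw [if_pos hc, if_pos ((dist_shift_lt v x' R hR t).mpr h2)]
  · rw [if_neg hc]
    split_ifs
    · exact (hw v hv).le
    · exact le_refl 0

/-- pseudo-wedge pruning. With `Wedge(x)` upward (endpoints
`θb, θe` of the minimal covering arc `CA(x) ⊆ (0,π)`), and `θ ∈ [π,2π]` such that the
closed half-plane beyond the bisector `B(x,θ)` has weight at least `W₁ ≥ W*(x)`,
every point `x'` outside `PW(x) = Wedge(x) ∩ H(F(x,θ), y(x,θ))` has `W*(x') ≥ W*(x)`. -/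
theorem stmt_19 (V : Finset Plane) (w : Plane → ℝ) (hw : ∀ v ∈ V, 0 < w v)
    (R : ℝ) (hR : 0 < R) (x : Plane) (θb θe : ℝ)
    (hb : 0 ≤ θb) (he : θe ≤ Real.pi) (hlt : θb < θe)
    (hcover : ∀ θ' ∈ Set.Ico (0 : ℝ) (2 * Real.pi),
      Wang V w R x θ' = WstarC V w R x → θ' ∈ Set.Ioo θb θe)
    (hminb : ∀ ε > (0 : ℝ), ∃ θ' ∈ Set.Ioo θb (θb + ε), Wang V w R x θ' = WstarC V w R x)
    (hmine : ∀ ε > (0 : ℝ), ∃ θ' ∈ Set.Ioo (θe - ε) θe, Wang V w R x θ' = WstarC V w R x)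
    (θ : ℝ) (hθ : θ ∈ Set.Icc Real.pi (2 * Real.pi)) (W₁ : ℝ)
    (hW₁ : W₁ ≤ ∑ v ∈ V, if dist v (x + R • dir θ) ≤ dist v x then w v else 0)
    (hW₁' : WstarC V w R x ≤ W₁)
    (x' : Plane)
    (hx' : ¬ (0 ≤ ⟪x' - x, dir θb⟫ ∧ 0 ≤ ⟪x' - x, dir θe⟫ ∧ 0 ≤ ⟪x' - x, dir θ⟫)) :
    WstarC V w R x ≤ WstarC V w R x' := by
  have bdd' := wang_bddAbove V w hw R x'
  rw [not_and_or, not_and_or] at hx'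
  have key : ∀ t : ℝ, Wang V w R x t = WstarC V w R x → ⟪x' - x, dir t⟫ ≤ 0 →
      WstarC V w R x ≤ WstarC V w R x' := by
    intro t ht hle
    calc WstarC V w R x = Wang V w R x t := ht.symm
      _ ≤ Wang V w R x' t := wang_mono V w hw R hR x x' t hle
      _ ≤ WstarC V w R x' := le_csSup bdd' ⟨t, rfl⟩
  have cont : ∀ t0 : ℝ, ⟪x' - x, dir t0⟫ < 0 →
      ∃ ε > (0:ℝ), ∀ t : ℝ, |t - t0| < ε → ⟪x' - x, dir t⟫ < 0 := by
    intro t0 ht0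
    have hf : Continuous fun t : ℝ => ⟪x' - x, dir t⟫ := by
      have : (fun t : ℝ => ⟪x' - x, dir t⟫) =
          fun t => (x' - x) 0 * Real.cos t + (x' - x) 1 * Real.sin t := by
        funext t; exact inner_dir _ t
      rw [this]
      exact (continuous_const.mul Real.continuous_cos).add (continuous_const.mul Real.continuous_sin)
    have hev : ∀ᶠ t in nhds t0, ⟪x' - x, dir t⟫ < 0 :=
      hf.continuousAt.eventually_lt continuousAt_const ht0
    rcases Metric.eventually_nhds_iff.mp hev with ⟨ε, hε, hball⟩
    exact ⟨ε, hε, fun t ht => hball (by rwa [Real.dist_eq])⟩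
  rcases hx' with hB | hB
  · push_neg at hB
    rcases cont θb hB with ⟨ε, hε, hball⟩
    rcases hminb ε hε with ⟨t, ⟨ht1, ht2⟩, ht⟩
    exact key t ht (hball t (by rw [abs_of_pos (by linarith)]; linarith)).le
  rcases hB with hB | hB
  · push_neg at hB
    rcases cont θe hB with ⟨ε, hε, hball⟩
    rcases hmine ε hε with ⟨t, ⟨ht1, ht2⟩, ht⟩
    exact key t ht (hball t (by rw [abs_of_neg (by linarith)]; linarith)).le
  · push_neg at hB
    have h1 : (∑ v ∈ V, if dist v (x + R • dir θ) ≤ dist v x then w v else 0)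
        ≤ Wang V w R x' θ := by
      refine Finset.sum_le_sum fun v hv => ?_
      by_cases hc : dist v (x + R • dir θ) ≤ dist v x
      · have h1 : R / 2 ≤ ⟪v - x, dir θ⟫ := (dist_shift_le v x R hR θ).mp hc
        have h2 : R / 2 < ⟪v - x', dir θ⟫ := by
          have : v - x' = (v - x) - (x' - x) := by abel
          rw [this, inner_sub_left]; linarith
        rw [if_pos hc, if_pos ((dist_shift_lt v x' R hR θ).mpr h2)]
      · rw [if_neg hc]
        split_ifs
        · exact (hw v hv).le
        · exact le_refl 0
    calc WstarC V w R x ≤ W₁ := hW₁'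
      _ ≤ _ := hW₁
      _ ≤ Wang V w R x' θ := h1
      _ ≤ WstarC V w R x' := le_csSup bdd' ⟨θ, rfl⟩
end
end
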